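/- For α ∈ (0,1) and 0 ≤ y < p, define M_{1,α}(p,y) = (1/Γ(1-α)) ∫_y^p (1 - p^{-2/α} μ^{2/α})^{-α} dμ. Then lim_{α → 1⁻} M_{1,α}(p,y) = p/2 for all 0 ≤ y < p. -/

import Mathlib

open Real MeasureTheory intervalIntegral Set Filter Topology

/-- `M_{1,α}(p,y) = (1/Γ(1-α)) ∫_y^p (1 - p^{-2/α} μ^{2/α})^{-α} dμ`. -/
noncomputable def MoneA (α p y : ℝ) : ℝ :=
  (1 / Real.Gamma (1 - α)) * ∫ μ in y..p, (1 - p ^ (-(2/α)) * μ ^ (2/α)) ^ (-α)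

lemma realBeta {a b : ℝ} (ha : 0 < a) (hb : 0 < b) :
    ∫ x in (0:ℝ)..1, x ^ (a-1) * (1-x) ^ (b-1) =
      Real.Gamma a * Real.Gamma b / Real.Gamma (a+b) := by
  have key : Complex.Gamma a * Complex.Gamma b
      = Complex.Gamma (a+b) * Complex.betaIntegral a b := by
    have := Complex.Gamma_mul_Gamma_eq_betaIntegral
      (s := (a:ℂ)) (t := (b:ℂ)) (by simpa using ha) (by simpa using hb)
    simpa using this
  have hbeta : Complex.betaIntegral a b
      = ((∫ x in (0:ℝ)..1, x ^ (a-1) * (1-x) ^ (b-1) : ℝ) : ℂ) := by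
    rw [Complex.betaIntegral, ← intervalIntegral.integral_ofReal]
    apply intervalIntegral.integral_congr
    intro x hx
    rw [Set.uIcc_of_le (by norm_num : (0:ℝ) ≤ 1)] at hx
    have hx0 : 0 ≤ x := hx.1
    have hx1 : 0 ≤ 1 - x := by linarith [hx.2]
    push_cast
    rw [Complex.ofReal_cpow hx0, Complex.ofReal_cpow hx1]
    push_cast
    ring
  rw [hbeta] at key
  have hG : (Real.Gamma (a+b) : ℂ) ≠ 0 := by
    simp [Complex.ofReal_ne_zero]
    exact (Real.Gamma_pos_of_pos (by linarith)).ne'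
  rw [show ((a:ℂ)+b) = ((a+b:ℝ):ℂ) by push_cast; ring, Complex.Gamma_ofReal,
    Complex.Gamma_ofReal, Complex.Gamma_ofReal] at key
  have : ((Real.Gamma a * Real.Gamma b : ℝ) : ℂ)
      = ((Real.Gamma (a+b) * ∫ x in (0:ℝ)..1, x ^ (a-1) * (1-x) ^ (b-1) : ℝ) : ℂ) := by
    push_cast; exact key
  have h2 := Complex.ofReal_injective this
  field_simp
  linarith [h2]

lemma gInt {α : ℝ} (h0 : 0 < α) (h1 : α < 1) :
    IntervalIntegrable (fun q => (1-q)^(-α) * q^(α/2-1)) volume 0 1 := by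
  have half : IntervalIntegrable (fun q => (1-q)^(-α) * q^(α/2-1)) volume 0 (1/2) := by
    have h1' : IntervalIntegrable (fun q : ℝ => q^(α/2-1)) volume 0 (1/2) :=
      intervalIntegral.intervalIntegrable_rpow' (by linarith)
    have hc : ContinuousOn (fun q : ℝ => (1-q)^(-α)) (Set.uIcc 0 (1/2)) := by
      apply ContinuousOn.rpow_const (by fun_prop)
      intro x hx
      rw [Set.uIcc_of_le (by norm_num : (0:ℝ) ≤ 1/2)] at hx
      left; intro h; linarith [hx.2, sub_eq_zero.mp h]
    exact h1'.continuousOn_mul hc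
  have half2 : IntervalIntegrable (fun q => (1-q)^(-α) * q^(α/2-1)) volume (1/2) 1 := by
    have h1' : IntervalIntegrable (fun q : ℝ => q^(-α)) volume 0 (1/2) :=
      intervalIntegral.intervalIntegrable_rpow' (by linarith)
    have h2' : IntervalIntegrable (fun q : ℝ => (1-q)^(-α)) volume (1/2) 1 := by
      have := h1'.comp_sub_left 1
      norm_num at this
      exact this.symm
    have hc : ContinuousOn (fun q : ℝ => q^(α/2-1)) (Set.uIcc (1/2) 1) := by
      apply ContinuousOn.rpow_const (by fun_prop)
      intro x hx
      rw [Set.uIcc_of_le (by norm_num : (1:ℝ)/2 ≤ 1)] at hx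
      left
      intro h; rw [h] at hx; norm_num at hx
    exact h2'.mul_continuousOn hc
  exact half.trans half2

lemma keyCOV {α p y : ℝ} (h0 : 0 < α) (h1 : α < 1) (hy : 0 ≤ y) (hyp : y < p) :
    ∫ μ in y..p, (1 - p ^ (-(2/α)) * μ ^ (2/α)) ^ (-α)
      = (p*α/2) * ∫ q in ((y/p)^(2/α))..1, (1-q)^(-α) * q^(α/2-1) := by
  have hp : 0 < p := lt_of_le_of_lt hy hyp
  set r : ℝ := 2/α with hr_def
  have hr : 0 < r := by positivity
  have hrα : r * (α/2) = 1 := by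
    rw [hr_def, div_mul_div_comm, mul_comm α 2, div_self (ne_of_gt (by positivity))]
  have hs : 0 ≤ y/p := by positivity
  have hs1 : y/p < 1 := (div_lt_one hp).mpr hyp
  set g : ℝ → ℝ := fun q => (1-q)^(-α) * q^(α/2-1) with hg_def
  set f : ℝ → ℝ := fun μ => (μ/p)^r with hf_def
  -- derivative
  have hderiv : ∀ x ∈ Ioo y p, HasDerivWithinAt f ((r/p) * (x/p)^(r-1)) (Ioo y p) x := by
    intro x hx
    have h1 : HasDerivAt (fun μ : ℝ => μ/p) (1/p) x := by
      simpa using (hasDerivAt_id x).div_const p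
    have hx0 : x/p ≠ 0 := by
      have : 0 < x := lt_of_le_of_lt hy hx.1
      positivity
    have h2 : HasDerivAt (fun u : ℝ => u^r) (r * (x/p)^(r-1)) (x/p) :=
      Real.hasDerivAt_rpow_const (Or.inl hx0)
    have := h2.comp x h1
    have h3 : HasDerivAt f ((r/p) * (x/p)^(r-1)) x := by
      rw [show (r/p) * (x/p)^(r-1) = r * (x/p)^(r-1) * (1/p) by ring]; exact this
    exact h3.hasDerivWithinAt
  -- injectivity
  have hinj : InjOn f (Ioo y p) := by
    intro a ha b hb hab
    have ha0 : 0 ≤ a/p := by have := lt_of_le_of_lt hy ha.1; positivity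
    have hb0 : 0 ≤ b/p := by have := lt_of_le_of_lt hy hb.1; positivity
    have := congrArg (fun x : ℝ => x ^ (α/2)) hab
    simp only [hf_def, ← Real.rpow_mul ha0, ← Real.rpow_mul hb0, hrα, Real.rpow_one] at this
    field_simp at this
    exact this
  -- image
  have himg : f '' Ioo y p = Ioo ((y/p)^r) 1 := by
    ext q
    simp only [mem_image, mem_Ioo]
    constructor
    · rintro ⟨μ, ⟨hμ1, hμ2⟩, rfl⟩
      have hμ0 : 0 < μ := lt_of_le_of_lt hy hμ1
      have ht0 : 0 ≤ μ/p := by positivity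
      have ht1 : μ/p < 1 := (div_lt_one hp).mpr hμ2
      constructor
      · exact Real.rpow_lt_rpow hs (by gcongr) hr
      · exact Real.rpow_lt_one ht0 ht1 hr
    · rintro ⟨hq1, hq2⟩
      have hq0 : 0 < q := lt_of_le_of_lt (Real.rpow_nonneg hs r) hq1
      refine ⟨p * q^(α/2), ⟨?_, ?_⟩, ?_⟩
      · have := Real.rpow_lt_rpow (Real.rpow_nonneg hs r) hq1 (by positivity : (0:ℝ) < α/2)
        rw [← Real.rpow_mul hs, hrα, Real.rpow_one] at this
        calc y = p * (y/p) := by field_simp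
        _ < p * q^(α/2) := by gcongr
      · have : q^(α/2) < 1 := Real.rpow_lt_one hq0.le hq2 (by positivity)
        calc p * q^(α/2) < p * 1 := by gcongr
        _ = p := mul_one p
      · show (p * q^(α/2) / p)^r = q
        rw [mul_div_cancel_left₀ _ hp.ne', ← Real.rpow_mul hq0.le]
        rw [show α/2 * r = 1 by rw [mul_comm]; exact hrα, Real.rpow_one]
  -- change of variables
  have hCOV := MeasureTheory.integral_image_eq_integral_abs_deriv_smul
    measurableSet_Ioo hderiv hinj g
  rw [himg] at hCOV
  -- pointwise simplification of the right side
  have hpt : ∀ μ ∈ Ioo y p, |(r/p) * (μ/p)^(r-1)| • g (f μ)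
      = (r/p) * (1 - p ^ (-(2/α)) * μ ^ (2/α)) ^ (-α) := by
    intro μ hμ
    have hμ0 : 0 < μ := lt_of_le_of_lt hy hμ.1
    have ht0 : 0 < μ/p := by positivity
    have habs : |(r/p) * (μ/p)^(r-1)| = (r/p) * (μ/p)^(r-1) := by
      apply abs_of_nonneg; positivity
    have hbase : p ^ (-(2/α)) * μ ^ (2/α) = (μ/p)^r := by
      rw [hr_def, Real.div_rpow hμ0.le hp.le, Real.rpow_neg hp.le, div_eq_mul_inv]
      ring
    rw [smul_eq_mul, habs]
    simp only [hg_def, hf_def]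
    have hpow : ((μ/p)^r)^(α/2-1) = (μ/p)^(r*(α/2-1)) := (Real.rpow_mul ht0.le _ _).symm
    rw [hbase, hpow]
    have hone : (μ/p)^(r-1) * (μ/p)^(r*(α/2-1)) = 1 := by
      rw [← Real.rpow_add ht0]
      rw [show r - 1 + r*(α/2-1) = 0 by linear_combination hrα, Real.rpow_zero]
    linear_combination (r/p * (1-(μ/p)^r)^(-α)) * hone
  rw [MeasureTheory.setIntegral_congr_fun measurableSet_Ioo hpt] at hCOV
  -- assemble
  have hcle : (y/p)^r ≤ 1 := (Real.rpow_le_one hs hs1.le hr.le)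
  rw [intervalIntegral.integral_of_le hcle, MeasureTheory.integral_Ioc_eq_integral_Ioo, hCOV,
    MeasureTheory.integral_const_mul]
  rw [intervalIntegral.integral_of_le hyp.le, MeasureTheory.integral_Ioc_eq_integral_Ioo]
  have hone : p*α/2 * (r/p) = 1 := by
    rw [hr_def, div_div, div_mul_div_comm, div_eq_one_iff_eq (ne_of_gt (by positivity))]
    ring
  rw [← mul_assoc, hone, one_mul]

lemma identity {α p y : ℝ} (h0 : 0 < α) (h1 : α < 1) (hy : 0 ≤ y) (hyp : y < p) :
    MoneA α p y = (p*α/2) * (Real.Gamma (α/2) / Real.Gamma (1-α/2))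
      - (p*α/2) * ((1/Real.Gamma (1-α)) *
          ∫ q in (0:ℝ)..((y/p)^(2/α)), (1-q)^(-α) * q^(α/2-1)) := by
  have hp : 0 < p := lt_of_le_of_lt hy hyp
  rw [MoneA, keyCOV h0 h1 hy hyp]
  set c := (y/p)^(2/α) with hc_def
  have hs0 : 0 ≤ y/p := by positivity
  have hs1 : y/p < 1 := (div_lt_one hp).mpr hyp
  have hc0 : 0 ≤ c := Real.rpow_nonneg hs0 _
  have hc1 : c ≤ 1 := Real.rpow_le_one hs0 hs1.le (by positivity)
  have hmem : ∀ z : ℝ, 0 ≤ z → z ≤ 1 → z ∈ Set.uIcc (0:ℝ) 1 := by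
    intro z hz0 hz1
    rw [Set.uIcc_of_le (by norm_num : (0:ℝ) ≤ 1)]
    exact ⟨hz0, hz1⟩
  have i1 : IntervalIntegrable (fun q => (1-q)^(-α) * q^(α/2-1)) volume 0 c :=
    (gInt h0 h1).mono_set (Set.uIcc_subset_uIcc (hmem 0 le_rfl (by norm_num)) (hmem c hc0 hc1))
  have i2 : IntervalIntegrable (fun q => (1-q)^(-α) * q^(α/2-1)) volume c 1 :=
    (gInt h0 h1).mono_set (Set.uIcc_subset_uIcc (hmem c hc0 hc1) (hmem 1 (by norm_num) le_rfl))
  have hsplit := intervalIntegral.integral_add_adjacent_intervals i1 i2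
  have hbeta : ∫ q in (0:ℝ)..1, (1-q)^(-α) * q^(α/2-1)
      = Real.Gamma (α/2) * Real.Gamma (1-α) / Real.Gamma (1-α/2) := by
    have := realBeta (a := α/2) (b := 1-α) (by linarith) (by linarith)
    rw [show α/2 + (1-α) = 1-α/2 by ring] at this
    rw [← this]
    apply intervalIntegral.integral_congr
    intro x _
    rw [show (1-α)-1 = -α by ring]
    ring
  have hint : (∫ q in c..1, (1-q)^(-α) * q^(α/2-1))
      = Real.Gamma (α/2) * Real.Gamma (1-α) / Real.Gamma (1-α/2)
        - ∫ q in (0:ℝ)..c, (1-q)^(-α) * q^(α/2-1) := by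
    rw [← hbeta, ← hsplit]; ring
  rw [hint]
  have hΓ : Real.Gamma (1-α) ≠ 0 := (Real.Gamma_pos_of_pos (by linarith)).ne'
  field_simp

lemma invGamma_tendsto : Tendsto (fun α : ℝ => 1 / Real.Gamma (1-α)) (𝓝[<] (1:ℝ)) (𝓝 0) := by
  have hΓcont : ContinuousAt Real.Gamma 1 := by
    apply (Real.differentiableAt_Gamma _).continuousAt
    intro m h
    have h1 : (0:ℝ) ≤ (m:ℝ) := Nat.cast_nonneg m
    have h2 : (1:ℝ) = -(m:ℝ) := h
    linarith
  have hcont : ContinuousAt (fun x : ℝ => x / Real.Gamma (x+1)) 0 := by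
    apply ContinuousAt.div continuousAt_id
    · have hf : ContinuousAt (fun x : ℝ => x + 1) 0 := by fun_prop
      have h01 : ContinuousAt Real.Gamma ((0:ℝ)+1) := by rw [zero_add]; exact hΓcont
      exact ContinuousAt.comp (x := (0:ℝ)) (f := fun x : ℝ => x + 1) (g := Real.Gamma) h01 hf
    · simp [Real.Gamma_one]
  have h2 : Tendsto (fun α : ℝ => 1-α) (𝓝[<] (1:ℝ)) (𝓝 0) := by
    have h2' : Tendsto (fun α : ℝ => 1-α) (𝓝 (1:ℝ)) (𝓝 (1-1)) :=
      (continuous_const.sub continuous_id).tendsto (1:ℝ)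
    rw [sub_self] at h2'
    exact h2'.mono_left nhdsWithin_le_nhds
  have h3 := (hcont.tendsto.comp h2)
  simp only [Function.comp, Real.Gamma_one, zero_div] at h3
  apply h3.congr'
  filter_upwards [self_mem_nhdsWithin] with α (hα : α < 1)
  have hne : 1 - α ≠ 0 := by intro h; have := sub_eq_zero.mp h; linarith
  show (1-α) / Real.Gamma ((1-α) + 1) = 1 / Real.Gamma (1-α)
  rw [Real.Gamma_add_one hne]
  have hΓne : Real.Gamma (1-α) ≠ 0 := (Real.Gamma_pos_of_pos (by linarith)).ne'
  field_simp

/-- For `0 ≤ y < p`, `M_{1,α}(p,y) → p/2` as `α → 1⁻`. -/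
theorem stmt10 (p y : ℝ) (hy : 0 ≤ y) (hyp : y < p) :
    Tendsto (fun α => MoneA α p y) (𝓝[<] (1:ℝ)) (𝓝 (p / 2)) := by
  have hp : 0 < p := lt_of_le_of_lt hy hyp
  have hs0 : 0 ≤ y/p := by positivity
  have hs1 : y/p < 1 := (div_lt_one hp).mpr hyp
  set S2 : ℝ := (y/p) ^ (2:ℝ) with hS2
  have hS20 : 0 ≤ S2 := Real.rpow_nonneg hs0 _
  have hS21 : S2 < 1 := by
    rcases eq_or_lt_of_le hs0 with h|h
    · rw [hS2, ← h, Real.zero_rpow (by norm_num)]; norm_num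
    · exact Real.rpow_lt_one hs0 hs1 (by norm_num)
  have hmem : Ioo (1/2:ℝ) 1 ∈ 𝓝[<] (1:ℝ) :=
    Ioo_mem_nhdsLT_of_mem ⟨by norm_num, le_rfl⟩
  set A : ℝ → ℝ := fun α => (p*α/2) * (Real.Gamma (α/2) / Real.Gamma (1-α/2)) with hA
  set B : ℝ → ℝ := fun α => (p*α/2) * ((1/Real.Gamma (1-α)) *
      ∫ q in (0:ℝ)..((y/p)^(2/α)), (1-q)^(-α) * q^(α/2-1)) with hB
  -- Gamma continuous at 1/2
  have hΓhalf : ContinuousAt Real.Gamma (1/2 : ℝ) := by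
    apply (Real.differentiableAt_Gamma _).continuousAt
    intro m h
    have h1 : (0:ℝ) ≤ (m:ℝ) := Nat.cast_nonneg m
    have h2 : (1/2:ℝ) = -(m:ℝ) := h
    linarith
  have hΓhalf_ne : Real.Gamma (1/2 : ℝ) ≠ 0 := (Real.Gamma_pos_of_pos (by norm_num)).ne'
  -- A tends to p/2
  have hAt : Tendsto A (𝓝[<] (1:ℝ)) (𝓝 (p/2)) := by
    have hc1 : ContinuousAt (fun α : ℝ => Real.Gamma (α/2)) 1 := by
      have hf : ContinuousAt (fun α : ℝ => α/2) 1 := by fun_prop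
      have h01 : ContinuousAt Real.Gamma ((1:ℝ)/2) := hΓhalf
      exact ContinuousAt.comp (x := (1:ℝ)) (f := fun α : ℝ => α/2) h01 hf
    have hc2 : ContinuousAt (fun α : ℝ => Real.Gamma (1-α/2)) 1 := by
      have hf : ContinuousAt (fun α : ℝ => 1-α/2) 1 := by fun_prop
      have h01 : ContinuousAt Real.Gamma (1-(1:ℝ)/2) := by
        rw [show (1:ℝ)-1/2 = 1/2 by norm_num]; exact hΓhalf
      exact ContinuousAt.comp (x := (1:ℝ)) (f := fun α : ℝ => 1-α/2) h01 hf
    have hc2ne : Real.Gamma (1-(1:ℝ)/2) ≠ 0 := by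
      rw [show (1:ℝ)-1/2 = 1/2 by norm_num]; exact hΓhalf_ne
    have hcA : ContinuousAt A 1 := by
      apply ContinuousAt.mul (by fun_prop)
      exact hc1.div hc2 hc2ne
    have hval : A 1 = p/2 := by
      rw [hA]
      simp only
      rw [show (1:ℝ)-1/2 = 1/2 by norm_num, div_self hΓhalf_ne]
      ring
    have := hcA.tendsto.mono_left (nhdsWithin_le_nhds (s := Iio (1:ℝ)))
    rwa [hval] at this
  -- B tends to 0
  have hBt : Tendsto B (𝓝[<] (1:ℝ)) (𝓝 0) := by
    set K : ℝ := (p/2) * ((1-S2)⁻¹ * 4) with hK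
    apply squeeze_zero' (g := fun α => K * (1 / Real.Gamma (1-α)))
    · filter_upwards [hmem] with α hα
      obtain ⟨hα1, hα2⟩ := hα
      have h0 : 0 < α := by linarith
      have hΓpos : 0 < Real.Gamma (1-α) := Real.Gamma_pos_of_pos (by linarith)
      set c : ℝ := (y/p)^(2/α) with hc_def
      have hc0 : 0 ≤ c := Real.rpow_nonneg hs0 _
      have hcS2 : c ≤ S2 := by
        rcases eq_or_lt_of_le hs0 with h|h
        · rw [hc_def, ← h, Real.zero_rpow (by positivity)]; exact hS20
        · exact Real.rpow_le_rpow_of_exponent_ge h hs1.le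
            (by rw [le_div_iff₀ h0]; linarith)
      have hc1 : c < 1 := lt_of_le_of_lt hcS2 hS21
      have hDnn : 0 ≤ ∫ q in (0:ℝ)..c, (1-q)^(-α) * q^(α/2-1) := by
        apply intervalIntegral.integral_nonneg hc0
        intro q hq
        exact mul_nonneg (Real.rpow_nonneg (by linarith [hq.2]) _)
          (Real.rpow_nonneg hq.1 _)
      rw [hB]
      positivity
    · filter_upwards [hmem] with α hα
      obtain ⟨hα1, hα2⟩ := hα
      have h0 : 0 < α := by linarith
      have hΓpos : 0 < Real.Gamma (1-α) := Real.Gamma_pos_of_pos (by linarith)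
      set c : ℝ := (y/p)^(2/α) with hc_def
      have hc0 : 0 ≤ c := Real.rpow_nonneg hs0 _
      have hcS2 : c ≤ S2 := by
        rcases eq_or_lt_of_le hs0 with h|h
        · rw [hc_def, ← h, Real.zero_rpow (by positivity)]; exact hS20
        · exact Real.rpow_le_rpow_of_exponent_ge h hs1.le
            (by rw [le_div_iff₀ h0]; linarith)
      have hc1 : c < 1 := lt_of_le_of_lt hcS2 hS21
      have hmemIcc : ∀ z : ℝ, 0 ≤ z → z ≤ 1 → z ∈ Set.uIcc (0:ℝ) 1 := by
        intro z hz0 hz1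
        rw [Set.uIcc_of_le (by norm_num : (0:ℝ) ≤ 1)]
        exact ⟨hz0, hz1⟩
      have hIg : IntervalIntegrable (fun q => (1-q)^(-α) * q^(α/2-1)) volume 0 c :=
        (gInt h0 hα2).mono_set
          (Set.uIcc_subset_uIcc (hmemIcc 0 le_rfl (by norm_num)) (hmemIcc c hc0 hc1.le))
      have hIrhs : IntervalIntegrable (fun q : ℝ => (1-S2)⁻¹ * q^(α/2-1)) volume 0 c :=
        (intervalIntegral.intervalIntegrable_rpow' (by linarith)).const_mul _
      have hmono : (∫ q in (0:ℝ)..c, (1-q)^(-α) * q^(α/2-1))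
          ≤ ∫ q in (0:ℝ)..c, (1-S2)⁻¹ * q^(α/2-1) := by
        apply intervalIntegral.integral_mono_on hc0 hIg hIrhs
        intro q hq
        have hq1 : 0 < 1 - q := by linarith [hq.2]
        have step1 : (1-q)^(-α) ≤ (1-q)^(-1:ℝ) :=
          Real.rpow_le_rpow_of_exponent_ge hq1 (by linarith [hq.1]) (by linarith)
        have step2 : (1-q)^(-1:ℝ) = (1-q)⁻¹ := Real.rpow_neg_one _
        have step3 : (1-q)⁻¹ ≤ (1-S2)⁻¹ := by
          apply inv_anti₀ (by linarith)
          linarith [hq.2]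
        exact mul_le_mul_of_nonneg_right (by linarith [step1, step2 ▸ step1])
          (Real.rpow_nonneg hq.1 _)
      have hval : (∫ q in (0:ℝ)..c, (1-S2)⁻¹ * q^(α/2-1))
          = (1-S2)⁻¹ * (c^(α/2) / (α/2)) := by
        rw [intervalIntegral.integral_const_mul, integral_rpow (Or.inl (by linarith))]
        rw [show α/2-1+1 = α/2 by ring, Real.zero_rpow (by positivity)]
        ring
      have hcpow : c^(α/2) ≤ 1 := Real.rpow_le_one hc0 hc1.le (by positivity)
      have hfrac : c^(α/2) / (α/2) ≤ 4 := by
        rw [div_le_iff₀ (by positivity)]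
        linarith
      have hD : (∫ q in (0:ℝ)..c, (1-q)^(-α) * q^(α/2-1)) ≤ (1-S2)⁻¹ * 4 := by
        calc (∫ q in (0:ℝ)..c, (1-q)^(-α) * q^(α/2-1))
            ≤ (1-S2)⁻¹ * (c^(α/2) / (α/2)) := hval ▸ hmono
          _ ≤ (1-S2)⁻¹ * 4 := by
              apply mul_le_mul_of_nonneg_left hfrac
              have : 0 < 1 - S2 := by linarith
              positivity
      have hDnn : 0 ≤ ∫ q in (0:ℝ)..c, (1-q)^(-α) * q^(α/2-1) := by
        apply intervalIntegral.integral_nonneg hc0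
        intro q hq
        exact mul_nonneg (Real.rpow_nonneg (by linarith [hq.2]) _)
          (Real.rpow_nonneg hq.1 _)
      rw [hB, hK]
      have hΓinv : 0 ≤ 1 / Real.Gamma (1-α) := by positivity
      calc (p*α/2) * ((1/Real.Gamma (1-α)) * ∫ q in (0:ℝ)..c, (1-q)^(-α) * q^(α/2-1))
          ≤ (p*α/2) * ((1/Real.Gamma (1-α)) * ((1-S2)⁻¹ * 4)) := by
            apply mul_le_mul_of_nonneg_left _ (by positivity)
            exact mul_le_mul_of_nonneg_left hD hΓinv
        _ ≤ (p*1/2) * ((1/Real.Gamma (1-α)) * ((1-S2)⁻¹ * 4)) := by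
            apply mul_le_mul_of_nonneg_right _ (by
              have : 0 < 1 - S2 := by linarith
              positivity)
            nlinarith
        _ = (p/2) * ((1-S2)⁻¹ * 4) * (1 / Real.Gamma (1-α)) := by ring
    · have := invGamma_tendsto.const_mul K
      simpa using this
  have hfinal : Tendsto (fun α => A α - B α) (𝓝[<] (1:ℝ)) (𝓝 (p/2 - 0)) := hAt.sub hBt
  rw [sub_zero] at hfinal
  apply hfinal.congr'
  filter_upwards [hmem] with α hα
  exact (identity (by linarith [hα.1]) hα.2 hy hyp).symm
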